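/- For every natural number n ≥ 0: if y_n ∈ [−1/φ², 1/φ³) then x_{n+1} = x_n + 1 + φ and y_{n+1} = y_n + 1 + ψ, while if y_n ∈ [1/φ³, 1/φ) then x_{n+1} = x_n + φ and y_{n+1} = y_n + ψ. (This describes the successor map s on the set {(x_n, y_n) : n ∈ ℕ}.) -/
import Mathlib


open Real Finset

noncomputable section

/-- The golden mean φ = (1+√5)/2. -/
def phi : ℝ := (1 + Real.sqrt 5) / 2

/-- ψ = (1−√5)/2 = −1/φ. -/
def psi : ℝ := (1 - Real.sqrt 5) / 2

/-- A word `a : Fin k → ℕ` is binary if all its letters are 0 or 1. -/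
def IsBin {k : ℕ} (a : Fin k → ℕ) : Prop := ∀ i, a i ≤ 1

/-- N(a) = ∑_{i=1}^k a_i F_{k+2−i}  (here `i : Fin k` corresponds to `i+1`). -/
def Nw {k : ℕ} (a : Fin k → ℕ) : ℕ := ∑ i : Fin k, a i * Nat.fib (k + 1 - (i : ℕ))

/-- X(a) = ∑_{i=1}^k a_i φ^{k+2−i}. -/
def Xw {k : ℕ} (a : Fin k → ℕ) : ℝ := ∑ i : Fin k, (a i : ℝ) * phi ^ (k + 1 - (i : ℕ))

/-- Y(a) = ∑_{i=1}^k a_i ψ^{k+2−i}. -/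
def Yw {k : ℕ} (a : Fin k → ℕ) : ℝ := ∑ i : Fin k, (a i : ℝ) * psi ^ (k + 1 - (i : ℕ))

/-- R(n): the number of partitions of n into distinct Fibonacci numbers, i.e. the number
of finite sets S of integers, each ≥ 2, with n = ∑_{i∈S} F_i.  (So R(0) = 1.) -/
def R (n : ℕ) : ℕ :=
  Nat.card {S : Finset ℕ // (∀ i ∈ S, 2 ≤ i) ∧ ∑ i ∈ S, Nat.fib i = n}

/-- `IsZeck n b` : `b = b_1⋯b_k` is the Zeckendorf word of `n ≥ 1`, i.e. a binary word
with `b_1 = 1`, no two consecutive 1's, and N(b) = n. -/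
def IsZeck (n : ℕ) {k : ℕ} (b : Fin k → ℕ) : Prop :=
  IsBin b ∧ (∀ h : 0 < k, b ⟨0, h⟩ = 1) ∧
    (∀ i j : Fin k, (j : ℕ) = (i : ℕ) + 1 → b i * b j = 0) ∧ Nw b = n

/-- `IsXY n x y` : `(x, y) = (x_n, y_n)`, i.e. `x = X(b)` and `y = Y(b)` for the
Zeckendorf word `b` of `n` when `n ≥ 1`, and `(x, y) = (0, 0)` when `n = 0`. -/
def IsXY (n : ℕ) (x y : ℝ) : Prop :=
  (n = 0 ∧ x = 0 ∧ y = 0) ∨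
    ∃ (k : ℕ) (b : Fin k → ℕ), IsZeck n b ∧ x = Xw b ∧ y = Yw b

/-- The rotation T by 1/φ² on [−1/φ², 1/φ), extended to ℝ by the same formula. -/
def T (y : ℝ) : ℝ := if y < 1 / phi ^ 3 then y + 1 / phi ^ 2 else y + 1 / phi ^ 2 - 1

lemma sqrt5_sq : Real.sqrt 5 ^ 2 = 5 := Real.sq_sqrt (by norm_num)
lemma sqrt5_gt : 2 < Real.sqrt 5 := by nlinarith [sqrt5_sq, Real.sqrt_nonneg 5]
lemma sqrt5_lt : Real.sqrt 5 < 3 := by nlinarith [sqrt5_sq, Real.sqrt_nonneg 5]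
lemma phi_gt : 1 < phi := by unfold phi; linarith [sqrt5_gt]
lemma phi_lt : phi < 2 := by unfold phi; linarith [sqrt5_lt]
lemma phi_pos : 0 < phi := by linarith [phi_gt]
lemma phi_sq : phi ^ 2 = phi + 1 := by unfold phi; nlinarith [sqrt5_sq]
lemma psi_eq : psi = 1 - phi := by unfold psi phi; ring
lemma psi_sq : psi ^ 2 = psi + 1 := by rw [psi_eq]; nlinarith [phi_sq]
lemma inv1 : 1 / phi = phi - 1 := by
  rw [div_eq_iff (ne_of_gt phi_pos)]; nlinarith [phi_sq]
lemma inv2 : 1 / phi ^ 2 = 2 - phi := by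
  rw [div_eq_iff (pow_pos phi_pos 2).ne']; nlinarith [phi_sq]
lemma inv3 : 1 / phi ^ 3 = 2 * phi - 3 := by
  rw [div_eq_iff (pow_pos phi_pos 3).ne']; nlinarith [phi_sq, phi_gt]

lemma pow_fib {r : ℝ} (hr : r ^ 2 = r + 1) :
    ∀ m : ℕ, r ^ (m + 2) = (Nat.fib (m + 2) : ℝ) * r + (Nat.fib (m + 1) : ℝ) := by
  intro m
  induction m with
  | zero => simp [hr]
  | succ m ih =>
    have : r ^ (m + 3) = r ^ (m + 2) * r := by ring
    rw [this, ih, Nat.fib_add_two (n := m + 1)]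
    push_cast
    nlinarith [hr]

def Mw {k : ℕ} (a : Fin k → ℕ) : ℕ := ∑ i : Fin k, a i * Nat.fib (k - (i : ℕ))

lemma sum_split {k : ℕ} (b : Fin k → ℕ) {r : ℝ} (hr : r ^ 2 = r + 1) :
    ∑ i : Fin k, (b i : ℝ) * r ^ (k + 1 - (i : ℕ)) = (Nw b : ℝ) * r + (Mw b : ℝ) := by
  unfold Nw Mw
  push_cast
  rw [Finset.sum_mul, ← Finset.sum_add_distrib]
  apply Finset.sum_congr rfl
  intro i _
  have hi : (i : ℕ) < k := i.isLt
  have e1 : k + 1 - (i : ℕ) = (k - 1 - (i : ℕ)) + 2 := by omega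
  have e2 : (k - 1 - (i : ℕ)) + 1 = k - (i : ℕ) := by omega
  rw [e1, pow_fib hr, e2]
  ring

lemma Xw_eq {k : ℕ} (b : Fin k → ℕ) : Xw b = (Nw b : ℝ) * phi + (Mw b : ℝ) :=
  sum_split b phi_sq
lemma Yw_eq {k : ℕ} (b : Fin k → ℕ) : Yw b = (Nw b : ℝ) * psi + (Mw b : ℝ) :=
  sum_split b psi_sq

def Zp {k : ℕ} (b : Fin k → ℕ) : ℝ := ∑ i : Fin k, (b i : ℝ) * psi ^ (k - 1 - (i : ℕ))

lemma Zp_bound : ∀ {k : ℕ} (b : Fin k → ℕ), IsBin b → -1 < Zp b ∧ Zp b < phi := by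
  intro k
  induction k with
  | zero =>
    intro b _
    simp only [Zp, Finset.univ_eq_empty, Finset.sum_empty]
    constructor <;> nlinarith [phi_gt]
  | succ k ih =>
    intro b hb
    have hstep : Zp b = psi * Zp (fun i : Fin k => b i.castSucc) + (b (Fin.last k) : ℝ) := by
      unfold Zp
      rw [Fin.sum_univ_castSucc, Finset.mul_sum]
      simp only [Fin.val_last, Fin.coe_castSucc]
      congr 1
      · apply Finset.sum_congr rfl
        intro i _
        have hi : (i : ℕ) < k := i.isLt
        have e : (k + 1) - 1 - (i : ℕ) = (k - 1 - (i : ℕ)) + 1 := by omega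
        rw [e, pow_succ]
        ring
      · have e : (k + 1) - 1 - k = 0 := by omega
        rw [e]; simp
    obtain ⟨h1, h2⟩ := ih (fun i : Fin k => b i.castSucc) (fun i => hb i.castSucc)
    have hψ : psi = 1 - phi := psi_eq
    have hφ2 := phi_sq
    have hφ1 := phi_gt
    have hlast : b (Fin.last k) = 0 ∨ b (Fin.last k) = 1 :=
      Nat.le_one_iff_eq_zero_or_eq_one.mp (hb (Fin.last k))
    rcases hlast with h | h <;> rw [h] at hstep <;> rw [hstep] <;>
      constructor <;> push_cast <;> nlinarith [h1, h2, mul_lt_mul_of_pos_left h2 (show (0:ℝ) < phi - 1 by linarith), mul_lt_mul_of_pos_left h1 (show (0:ℝ) < phi - 1 by linarith)]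

lemma Yw_bound {k : ℕ} (b : Fin k → ℕ) (hb : IsBin b) :
    phi - 2 ≤ Yw b ∧ Yw b < phi - 1 := by
  have hY : Yw b = psi ^ 2 * Zp b := by
    unfold Yw Zp
    rw [Finset.mul_sum]
    apply Finset.sum_congr rfl
    intro i _
    have hi : (i : ℕ) < k := i.isLt
    have e : k + 1 - (i : ℕ) = (k - 1 - (i : ℕ)) + 2 := by omega
    rw [e, pow_add]
    ring
  obtain ⟨h1, h2⟩ := Zp_bound b hb
  have hψ2 : psi ^ 2 = 2 - phi := by rw [psi_sq, psi_eq]; ring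
  have hφ1 := phi_gt
  have hφ2 := phi_lt
  have hφsq := phi_sq
  rw [hY, hψ2]
  constructor <;> nlinarith [mul_lt_mul_of_pos_left h2 (show (0:ℝ) < 2 - phi by linarith), mul_lt_mul_of_pos_left h1 (show (0:ℝ) < 2 - phi by linarith)]


lemma isXY_key {n : ℕ} {x y : ℝ} (h : IsXY n x y) :
    ∃ m : ℕ, x = n * phi + m ∧ y = n * psi + m ∧ phi - 2 ≤ y ∧ y < phi - 1 := by
  rcases h with ⟨hn, hx, hy⟩ | ⟨k, b, ⟨hbin, _, _, hN⟩, hx, hy⟩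
  · refine ⟨0, ?_, ?_, ?_, ?_⟩ <;> subst hn <;> simp [hx, hy] <;> linarith [phi_gt, phi_lt]
  · refine ⟨Mw b, ?_, ?_, ?_, ?_⟩
    · rw [hx, Xw_eq, hN]
    · rw [hy, Yw_eq, hN]
    · rw [hy]; exact (Yw_bound b hbin).1
    · rw [hy]; exact (Yw_bound b hbin).2


/-- the successor map.  If y_n ∈ [−1/φ², 1/φ³) then
(x_{n+1}, y_{n+1}) = (x_n + 1 + φ, y_n + 1 + ψ); if y_n ∈ [1/φ³, 1/φ) then
(x_{n+1}, y_{n+1}) = (x_n + φ, y_n + ψ). -/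
theorem stmt_6 (n : ℕ) (xn yn xs ys : ℝ)
    (h1 : IsXY n xn yn) (h2 : IsXY (n + 1) xs ys) :
    (yn ∈ Set.Ico (-(1 / phi ^ 2)) (1 / phi ^ 3) →
      xs = xn + 1 + phi ∧ ys = yn + 1 + psi) ∧
    (yn ∈ Set.Ico (1 / phi ^ 3) (1 / phi) →
      xs = xn + phi ∧ ys = yn + psi) := by
  obtain ⟨m, hx, hy, hyl, hyu⟩ := isXY_key h1
  obtain ⟨m', hx', hy', hyl', hyu'⟩ := isXY_key h2
  have hφ1 := phi_gt
  have hφ2 := phi_lt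
  have hψ := psi_eq
  simp only [Set.mem_Ico, inv1, inv2, inv3]
  constructor
  · rintro ⟨ha, hb⟩
    have hd1 : (m : ℝ) < m' := by
      rw [hψ] at hy hy'; push_cast at hy hy' ⊢; nlinarith
    have hd2 : (m' : ℝ) < m + 2 := by
      rw [hψ] at hy hy'; push_cast at hy hy' ⊢; nlinarith
    have hm : m' = m + 1 := by
      have e1 : m < m' := by exact_mod_cast hd1
      have e2 : m' < m + 2 := by exact_mod_cast hd2
      omega
    subst hm
    constructor
    · rw [hx, hx']; push_cast; ring
    · rw [hy, hy', hψ]; push_cast; ring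
  · rintro ⟨ha, hb⟩
    have hd1 : (m : ℝ) - 1 < m' := by
      rw [hψ] at hy hy'; push_cast at hy hy' ⊢; nlinarith
    have hd2 : (m' : ℝ) < m + 1 := by
      rw [hψ] at hy hy'; push_cast at hy hy' ⊢; nlinarith
    have hm : m' = m := by
      have e1 : (m : ℤ) - 1 < m' := by exact_mod_cast hd1
      have e2 : (m' : ℤ) < m + 1 := by exact_mod_cast hd2
      omega
    subst hm
    constructor
    · rw [hx, hx']; push_cast; ring
    · rw [hy, hy', hψ]; push_cast; ring

end
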